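/- For 0 < p < 1, the row-stochastic matrix P_p = [[p, 1−p, 0],[p, 0, 1−p],[0, p, 1−p]] has stationary distribution u = (p², p(1−p), (1−p)²)/(p² − p + 1), i.e., u P_p = u and the entries of u sum to 1. -/

import Mathlib

theorem asymmetric_markov_stationary (p : ℝ) (hp : 0 < p) (hp1 : p < 1) :
    let P : Matrix (Fin 3) (Fin 3) ℝ := !![p, 1 - p, 0; p, 0, 1 - p; 0, p, 1 - p]
    let u : Fin 3 → ℝ :=
      ![p ^ 2 / (p ^ 2 - p + 1), p * (1 - p) / (p ^ 2 - p + 1),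
        (1 - p) ^ 2 / (p ^ 2 - p + 1)]
    Matrix.vecMul u P = u ∧ ∑ i, u i = 1 := by
  intro P u
  have hd : p ^ 2 - p + 1 ≠ 0 := by nlinarith
  constructor
  · funext i
    fin_cases i <;>
      simp [P, u, Matrix.vecMul, dotProduct, Fin.sum_univ_succ] <;>
      field_simp <;> ring
  · simp [u, Fin.sum_univ_succ]
    have hd' : 1 - p + p ^ 2 ≠ 0 := by nlinarith
    linear_combination mul_inv_cancel₀ hd'
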